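/- arXiv:2206.07590 — 3 statements merged into one kernel-verified Lean document; each statement's English description precedes it below -/
import Mathlib

section
/- For every integer n ≥ 0, E_{2n+2} = (2n+2) · E_{2n+1} − Σ_{i=0}^{n} C(2n+2, 2i+2) (-1)^{i+2} (4^{i+1} − 2) B_{2i+2} E_{2n-2i} + (-4)^{n+1} B_{2n+2}, where C(m,j) denotes the binomial coefficient and B_j denotes the j-th Bernoulli number. -/
open Polynomial Finset

/-- The derivative polynomials for tangent: `P 0 = X`,
`P (n+1) = (1 + X^2) * (P n)'`. -/
noncomputable def P : ℕ → Polynomial ℚ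
  | 0 => X
  | n + 1 => (1 + X ^ 2) * derivative (P n)

/-- The derivative polynomials for secant: `Q 0 = 1`,
`Q (n+1) = (1 + X^2) * (Q n)' + X * Q n`. -/
noncomputable def Q : ℕ → Polynomial ℚ
  | 0 => 1
  | n + 1 => (1 + X ^ 2) * derivative (Q n) + X * Q n

/-- The Euler numbers: `E (2j) = Q (2j) (0)` (secant numbers) and
`E (2j+1) = P (2j+1) (0)` (tangent numbers). -/
noncomputable def E (n : ℕ) : ℚ := if Even n then (Q n).eval 0 else (P n).eval 0


namespace EulerAux

open PowerSeries Complex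
open scoped Nat

noncomputable def Sc : ℂ⟦X⟧ := PowerSeries.sin ℂ
noncomputable def Cc : ℂ⟦X⟧ := PowerSeries.cos ℂ

lemma coeff_Sc (n : ℕ) : PowerSeries.coeff (R := ℂ) n Sc =
    if Even n then 0 else algebraMap ℚ ℂ ((-1)^(n/2) / n !) := by
  simp [Sc, PowerSeries.sin, coeff_mk]

lemma coeff_Cc (n : ℕ) : PowerSeries.coeff (R := ℂ) n Cc =
    if Even n then algebraMap ℚ ℂ ((-1)^(n/2) / n !) else 0 := by
  simp [Cc, PowerSeries.cos, coeff_mk]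

lemma natCast_eq_algebraMap (m : ℕ) : (m : ℂ) = algebraMap ℚ ℂ (m : ℚ) := by simp

lemma rescale_I_exp : rescale I (exp ℂ) = Cc + PowerSeries.C (R := ℂ) I * Sc := by
  ext n
  rw [coeff_rescale, map_add, PowerSeries.coeff_C_mul, coeff_Sc, coeff_Cc, coeff_exp]
  rcases Nat.even_or_odd n with h | h
  · obtain ⟨k, hk⟩ := h
    subst hk
    have h2 : (k + k) / 2 = k := by omega
    rw [if_pos ⟨k, rfl⟩, if_pos ⟨k, rfl⟩, h2]
    have hI : (I : ℂ) ^ (k + k) = (-1 : ℂ) ^ k := by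
      rw [pow_add, ← mul_pow, Complex.I_mul_I]
    rw [hI, mul_zero, add_zero, show ((-1 : ℂ)) ^ k = algebraMap ℚ ℂ ((-1)^k) by push_cast; ring,
      ← map_mul]
    congr 1
    ring
  · obtain ⟨k, hk⟩ := h
    subst hk
    have he : ¬ Even (2 * k + 1) := by rw [Nat.even_iff]; omega
    have h2 : (2 * k + 1) / 2 = k := by omega
    rw [if_neg he, if_neg he, h2]
    have hI : (I : ℂ) ^ (2 * k + 1) = (-1 : ℂ) ^ k * I := by
      rw [pow_succ, pow_mul, Complex.I_sq]
    rw [hI, zero_add, show ((-1 : ℂ)) ^ k = algebraMap ℚ ℂ ((-1)^k) by push_cast; ring]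
    push_cast [map_div₀, map_pow, map_inv₀, map_natCast, map_neg, map_one, map_mul]
    ring

lemma rescale_negI_exp : rescale (-I) (exp ℂ) = Cc - PowerSeries.C (R := ℂ) I * Sc := by
  ext n
  rw [coeff_rescale, map_sub, PowerSeries.coeff_C_mul, coeff_Sc, coeff_Cc, coeff_exp]
  rcases Nat.even_or_odd n with h | h
  · obtain ⟨k, hk⟩ := h
    subst hk
    have h2 : (k + k) / 2 = k := by omega
    rw [if_pos ⟨k, rfl⟩, if_pos ⟨k, rfl⟩, h2]
    have hI : (-I : ℂ) ^ (k + k) = (-1 : ℂ) ^ k := by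
      rw [pow_add, ← mul_pow]
      norm_num [Complex.I_mul_I]
    rw [hI, mul_zero, sub_zero, show ((-1 : ℂ)) ^ k = algebraMap ℚ ℂ ((-1)^k) by push_cast; ring,
      ← map_mul]
    congr 1
    ring
  · obtain ⟨k, hk⟩ := h
    subst hk
    have he : ¬ Even (2 * k + 1) := by rw [Nat.even_iff]; omega
    have h2 : (2 * k + 1) / 2 = k := by omega
    rw [if_neg he, if_neg he, h2]
    have hI : (-I : ℂ) ^ (2 * k + 1) = -((-1 : ℂ) ^ k * I) := by
      rw [pow_succ, pow_mul]
      norm_num [Complex.I_sq]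
    rw [hI, zero_sub, show ((-1 : ℂ)) ^ k = algebraMap ℚ ℂ ((-1)^k) by push_cast; ring]
    push_cast [map_div₀, map_pow, map_inv₀, map_natCast, map_neg, map_one, map_mul]
    ring

lemma pyth : Cc * Cc + Sc * Sc = 1 := by
  have h := exp_mul_exp_eq_exp_add (I : ℂ) (-I)
  rw [add_neg_cancel, rescale_zero, rescale_I_exp, rescale_negI_exp] at h
  simp only [RingHom.coe_comp, Function.comp_apply, constantCoeff_exp, map_one] at h
  have hI : (PowerSeries.C (R := ℂ) I) * (PowerSeries.C (R := ℂ) I) = -1 := by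
    rw [← map_mul, Complex.I_mul_I, map_neg, map_one]
  linear_combination h + Sc * Sc * hI

lemma dS : d⁄dX ℂ Sc = Cc := by
  ext n
  rw [PowerSeries.coeff_derivative, coeff_Sc, coeff_Cc]
  rcases Nat.even_or_odd n with h | h
  · obtain ⟨k, hk⟩ := h
    subst hk
    have he : ¬ Even (k + k + 1) := by rw [Nat.even_iff]; omega
    rw [if_neg he, if_pos ⟨k, rfl⟩]
    have h2 : (k + k + 1) / 2 = k := by omega
    have h3 : (k + k) / 2 = k := by omega
    rw [h2, h3, show ((k + k : ℕ) : ℂ) + 1 = algebraMap ℚ ℂ (((k + k : ℕ) : ℚ) + 1) by simp,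
      ← map_mul]
    congr 1
    rw [show (k + k + 1)! = (k+k)! * (k + k + 1) by rw [Nat.factorial_succ]; ring]
    have h4 : ((k+k)! : ℚ) ≠ 0 := Nat.cast_ne_zero.mpr (Nat.factorial_ne_zero _)
    push_cast
    field_simp
  · obtain ⟨k, hk⟩ := h
    subst hk
    have he : Even (2 * k + 1 + 1) := by rw [Nat.even_iff]; omega
    have he' : ¬ Even (2 * k + 1) := by rw [Nat.even_iff]; omega
    rw [if_pos he, if_neg he', mul_comm]
    simp

lemma dC : d⁄dX ℂ Cc = -Sc := by
  ext n
  rw [PowerSeries.coeff_derivative, coeff_Cc, map_neg, coeff_Sc]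
  rcases Nat.even_or_odd n with h | h
  · obtain ⟨k, hk⟩ := h
    subst hk
    have he : ¬ Even (k + k + 1) := by rw [Nat.even_iff]; omega
    rw [if_neg he, if_pos ⟨k, rfl⟩]
    simp
  · obtain ⟨k, hk⟩ := h
    subst hk
    have he : Even (2 * k + 1 + 1) := by rw [Nat.even_iff]; omega
    have he' : ¬ Even (2 * k + 1) := by rw [Nat.even_iff]; omega
    rw [if_pos he, if_neg he']
    have h2 : (2 * k + 1 + 1) / 2 = k + 1 := by omega
    have h3 : (2 * k + 1) / 2 = k := by omega
    rw [h2, h3, show ((2 * k + 1 : ℕ) : ℂ) + 1 = algebraMap ℚ ℂ (((2 * k + 1 : ℕ) : ℚ) + 1) by simp,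
      ← map_mul, ← map_neg]
    congr 1
    rw [show (2 * k + 1 + 1)! = (2*k+1)! * (2 * k + 1 + 1) by rw [Nat.factorial_succ]; ring]
    have h4 : ((2*k+1)! : ℚ) ≠ 0 := Nat.cast_ne_zero.mpr (Nat.factorial_ne_zero _)
    push_cast
    field_simp
    ring

lemma constCc : PowerSeries.constantCoeff (R := ℂ) Cc = 1 := by
  rw [← PowerSeries.coeff_zero_eq_constantCoeff_apply, coeff_Cc]
  norm_num

lemma constSc : PowerSeries.constantCoeff (R := ℂ) Sc = 0 := by
  rw [← PowerSeries.coeff_zero_eq_constantCoeff_apply, coeff_Sc]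
  norm_num


noncomputable def Sec : ℂ⟦X⟧ := Cc⁻¹
noncomputable def Tc : ℂ⟦X⟧ := Sc * Sec

lemma SecCc : Sec * Cc = 1 :=
  PowerSeries.inv_mul_cancel _ (by rw [constCc]; exact one_ne_zero)

lemma constSec : PowerSeries.constantCoeff (R := ℂ) Sec = 1 := by
  have := congrArg (PowerSeries.constantCoeff (R := ℂ)) SecCc
  rw [map_mul, constCc, map_one, mul_one] at this
  exact this

lemma constT : PowerSeries.constantCoeff (R := ℂ) Tc = 0 := by
  rw [Tc, map_mul, constSc, zero_mul]

lemma dSec : d⁄dX ℂ Sec = Tc * Sec := by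
  rw [Sec, PowerSeries.derivative_inv', dC, Tc, Sec]
  ring

lemma dT : d⁄dX ℂ Tc = 1 + Tc ^ 2 := by
  have h : d⁄dX ℂ Tc = Sc • (d⁄dX ℂ Sec) + Sec • (d⁄dX ℂ Sc) :=
    Derivation.leibniz _ _ _
  rw [smul_eq_mul, smul_eq_mul, dS, dSec] at h
  rw [h, Tc]
  linear_combination SecCc + Sc * Sc * Sec * SecCc - Sc*Sc*Sec*SecCc

noncomputable def D : Derivation ℚ ℂ⟦X⟧ ℂ⟦X⟧ := (PowerSeries.derivative ℂ).restrictScalars ℚ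

lemma D_apply (f : ℂ⟦X⟧) : D f = d⁄dX ℂ f := rfl

lemma iterD_T (n : ℕ) : (d⁄dX ℂ)^[n] Tc = Polynomial.aeval Tc (P n) := by
  induction n with
  | zero => simp [P]
  | succ n ih =>
    rw [Function.iterate_succ_apply', ih, show P (n+1) = (1 + Polynomial.X ^ 2) * derivative (P n) from rfl]
    have h := Derivation.map_aeval D (P n) Tc
    rw [D_apply, D_apply] at h
    rw [h, dT, smul_eq_mul, map_mul, map_add, map_one, map_pow, Polynomial.aeval_X]
    ring

lemma iterD_Sec (n : ℕ) : (d⁄dX ℂ)^[n] Sec = Polynomial.aeval Tc (Q n) * Sec := by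
  induction n with
  | zero => simp [Q]
  | succ n ih =>
    rw [Function.iterate_succ_apply', ih, show Q (n+1) = (1 + Polynomial.X ^ 2) * derivative (Q n) + Polynomial.X * Q n from rfl]
    have h : d⁄dX ℂ (Polynomial.aeval Tc (Q n) * Sec)
        = Polynomial.aeval Tc (Q n) • (d⁄dX ℂ Sec) + Sec • (d⁄dX ℂ (Polynomial.aeval Tc (Q n))) :=
      Derivation.leibniz _ _ _
    have h2 := Derivation.map_aeval D (Q n) Tc
    rw [D_apply, D_apply] at h2
    rw [h, h2, dT, dSec, smul_eq_mul, smul_eq_mul, smul_eq_mul]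
    rw [map_add, map_mul, map_mul, map_add, map_one, map_pow, Polynomial.aeval_X]
    ring

lemma constantCoeff_aeval (p : Polynomial ℚ) :
    PowerSeries.constantCoeff (R := ℂ) (Polynomial.aeval Tc p) = algebraMap ℚ ℂ (p.eval 0) := by
  induction p using Polynomial.induction_on' with
  | add p q hp hq => simp only [map_add, hp, hq, Polynomial.eval_add]
  | monomial n a =>
    rw [Polynomial.aeval_monomial, map_mul, map_pow, constT, Polynomial.eval_monomial]
    cases n with
    | zero => simp
    | succ m => simp [zero_pow]

lemma constantCoeff_iter (f : ℂ⟦X⟧) (n : ℕ) :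
    PowerSeries.constantCoeff (R := ℂ) ((d⁄dX ℂ)^[n] f) = n ! * PowerSeries.coeff (R := ℂ) n f := by
  induction n generalizing f with
  | zero => simp [PowerSeries.coeff_zero_eq_constantCoeff]
  | succ n ih =>
    rw [Function.iterate_succ_apply, ih, PowerSeries.coeff_derivative, Nat.factorial_succ]
    push_cast
    ring

lemma coeff_Tc (m : ℕ) : (m ! : ℂ) * PowerSeries.coeff (R := ℂ) m Tc = algebraMap ℚ ℂ ((P m).eval 0) := by
  rw [← constantCoeff_iter, iterD_T, constantCoeff_aeval]

lemma coeff_Sec (m : ℕ) : (m ! : ℂ) * PowerSeries.coeff (R := ℂ) m Sec = algebraMap ℚ ℂ ((Q m).eval 0) := by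
  rw [← constantCoeff_iter, iterD_Sec, map_mul, constantCoeff_aeval, constSec, mul_one]

noncomputable def Kc : ℂ⟦X⟧ := PowerSeries.mk fun n =>
  if Even n then algebraMap ℚ ℂ ((-4)^(n/2) * _root_.bernoulli n / n !) else 0

noncomputable def Lc : ℂ⟦X⟧ := PowerSeries.mk fun n =>
  if Even n then algebraMap ℚ ℂ ((-1)^(n/2) * _root_.bernoulli n / n !) else 0

lemma bern_odd {n : ℕ} (h : ¬ Even n) (h1 : n ≠ 1) : _root_.bernoulli n = 0 := by
  rw [bernoulli_eq_bernoulli'_of_ne_one h1]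
  exact bernoulli'_eq_zero_of_odd (Nat.not_even_iff_odd.mp h)
    (by rcases Nat.lt_or_ge n 2 with h2 | h2
        · interval_cases n <;> simp_all
        · omega)

lemma rescale_2I_bern :
    rescale (2*I) (bernoulliPowerSeries ℂ) = Kc - PowerSeries.C (R := ℂ) I * PowerSeries.X := by
  ext n
  rw [coeff_rescale, map_sub, PowerSeries.coeff_C_mul, bernoulliPowerSeries, coeff_mk,
    Kc, coeff_mk, PowerSeries.coeff_X]
  rcases Nat.even_or_odd n with h | h
  · obtain ⟨k, hk⟩ := h
    subst hk
    have h1 : k + k ≠ 1 := by omega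
    rw [if_pos ⟨k, rfl⟩, if_neg h1, mul_zero, sub_zero]
    have h2 : (k + k) / 2 = k := by omega
    have hI : ((2*I : ℂ)) ^ (k + k) = algebraMap ℚ ℂ ((-4 : ℚ) ^ k) := by
      rw [map_pow, show algebraMap ℚ ℂ (-4 : ℚ) = (-4 : ℂ) by norm_num, pow_add, ← mul_pow,
        show (2*I)*(2*I) = (-4 : ℂ) by
          rw [show (2*I)*(2*I) = 4*(I*I) by ring, Complex.I_mul_I]; norm_num]
    rw [hI, h2, ← map_mul]
    congr 1
    ring
  · have he : ¬ Even n := Nat.not_even_iff_odd.mpr h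
    rw [if_neg he]
    by_cases h1 : n = 1
    · subst h1
      rw [if_pos rfl, mul_one, _root_.bernoulli_one, pow_one]
      push_cast [map_div₀]
      norm_num [Nat.factorial]
      ring
    · rw [if_neg h1, mul_zero, zero_sub, bern_odd he h1]
      simp

lemma rescale_I_bern :
    rescale I (bernoulliPowerSeries ℂ) = Lc - PowerSeries.C (R := ℂ) (I/2) * PowerSeries.X := by
  ext n
  rw [coeff_rescale, map_sub, PowerSeries.coeff_C_mul, bernoulliPowerSeries, coeff_mk,
    Lc, coeff_mk, PowerSeries.coeff_X]
  rcases Nat.even_or_odd n with h | h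
  · obtain ⟨k, hk⟩ := h
    subst hk
    have h1 : k + k ≠ 1 := by omega
    rw [if_pos ⟨k, rfl⟩, if_neg h1, mul_zero, sub_zero]
    have h2 : (k + k) / 2 = k := by omega
    have hI : ((I : ℂ)) ^ (k + k) = algebraMap ℚ ℂ ((-1 : ℚ) ^ k) := by
      rw [map_pow, show algebraMap ℚ ℂ (-1 : ℚ) = (-1 : ℂ) by norm_num, pow_add, ← mul_pow,
        Complex.I_mul_I]
    rw [hI, h2, ← map_mul]
    congr 1
    ring
  · have he : ¬ Even n := Nat.not_even_iff_odd.mpr h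
    rw [if_neg he]
    by_cases h1 : n = 1
    · subst h1
      rw [if_pos rfl, mul_one, _root_.bernoulli_one, pow_one]
      push_cast [map_div₀]
      norm_num [Nat.factorial]
      ring
    · rw [if_neg h1, mul_zero, zero_sub, bern_odd he h1]
      simp


lemma C_ne_zero' {z : ℂ} (hz : z ≠ 0) : (PowerSeries.C (R := ℂ) z) ≠ 0 := by
  intro h
  have := congrArg (PowerSeries.constantCoeff (R := ℂ)) h
  simp only [PowerSeries.constantCoeff_C, map_zero] at this
  exact hz this

lemma hK0 : (Kc - PowerSeries.C (R := ℂ) I * PowerSeries.X) * ((Cc + PowerSeries.C (R := ℂ) I * Sc)^2 - 1)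
    = PowerSeries.C (R := ℂ) (2*I) * PowerSeries.X := by
  have h := congrArg (rescale (2*I)) (bernoulliPowerSeries_mul_exp_sub_one ℂ)
  rw [map_mul, map_sub, map_one, rescale_X, rescale_2I_bern] at h
  have he : rescale (2*I) (exp ℂ) = (Cc + PowerSeries.C (R := ℂ) I * Sc)^2 := by
    rw [← rescale_I_exp, sq, exp_mul_exp_eq_exp_add, two_mul]
  rw [he] at h
  exact h

lemma hL0 : (Lc - PowerSeries.C (R := ℂ) (I/2) * PowerSeries.X) * ((Cc + PowerSeries.C (R := ℂ) I * Sc) - 1)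
    = PowerSeries.C (R := ℂ) I * PowerSeries.X := by
  have h := congrArg (rescale I) (bernoulliPowerSeries_mul_exp_sub_one ℂ)
  rw [map_mul, map_sub, map_one, rescale_X, rescale_I_bern, rescale_I_exp] at h
  exact h

lemma haa : (PowerSeries.C (R := ℂ) I) * (PowerSeries.C (R := ℂ) I) = -1 := by
  rw [← map_mul, Complex.I_mul_I, map_neg, map_one]

lemma hKS : Kc * Sc = PowerSeries.X * Cc := by
  set a := PowerSeries.C (R := ℂ) I with ha
  set x := (PowerSeries.X : ℂ⟦X⟧) with hx
  have hc2 : PowerSeries.C (R := ℂ) (2*I) = 2 * a := by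
    rw [map_mul, ha, map_ofNat]
  have h1 : (2*a) * ((Kc - a*x) * Sc * (Cc + a*Sc)) = (2*a) * x := by
    linear_combination hK0 + (Kc - a*x)*Sc*Sc*haa + x*hc2 + (a*x - Kc)*pyth
  have h2 := mul_left_cancel₀ (a := 2*a) (by
      rw [← hc2]
      exact C_ne_zero' (by simp [Complex.I_ne_zero])) h1
  linear_combination (Cc - a*Sc)*h2 - (Kc - a*x)*Sc*pyth + (Kc - a*x)*Sc*Sc*Sc*haa

lemma hLS : Lc * (2 - 2*Cc) = PowerSeries.X * Sc := by
  set a := PowerSeries.C (R := ℂ) I with ha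
  set b := PowerSeries.C (R := ℂ) (I/2) with hb
  set x := (PowerSeries.X : ℂ⟦X⟧) with hx
  have hba : 2*b = a := by
    rw [hb, ha, show (2 : ℂ⟦X⟧) = PowerSeries.C (R := ℂ) 2 from (map_ofNat _ 2).symm, ← map_mul]
    congr 1
    ring
  linear_combination (Cc - 1 - a*Sc)*hL0 - (Lc - b*x)*pyth + (Lc - b*x)*Sc*Sc*haa
    - x*Sc*haa - (x*Cc - x)*hba


lemma twoC_ne : (2 - 2*Cc : ℂ⟦X⟧) ≠ 0 := by
  intro h
  have e : (2 - 2*Cc : ℂ⟦X⟧) = PowerSeries.C (R := ℂ) 2 - PowerSeries.C (R := ℂ) 2 * Cc := by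
    rw [map_ofNat]
  rw [e] at h
  have h2 := congrArg (PowerSeries.coeff (R := ℂ) 2) h
  rw [map_sub, PowerSeries.coeff_C_mul, PowerSeries.coeff_C, coeff_Cc] at h2
  norm_num [Nat.factorial, map_div₀] at h2

lemma mainH : 2*Lc = PowerSeries.X*Sc + Kc*(1+Cc) := by
  refine mul_right_cancel₀ twoC_ne ?_
  linear_combination 2*hLS - 2*Sc*hKS + 2*Kc*pyth

lemma FINAL : (2*Lc - Kc) * Sec = PowerSeries.X * Tc + Kc := by
  have hT : Tc = Sc * Sec := rfl
  rw [hT, ← mul_assoc]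
  linear_combination Sec*mainH + Kc*SecCc

lemma factC (m : ℕ) : ((m ! : ℕ) : ℂ) = algebraMap ℚ ℂ ((m ! : ℕ) : ℚ) := by simp

lemma coeff_Sec' (m : ℕ) :
    PowerSeries.coeff (R := ℂ) m Sec = algebraMap ℚ ℂ ((Q m).eval 0 / m !) := by
  have hm : ((m ! : ℕ) : ℂ) ≠ 0 := Nat.cast_ne_zero.mpr (Nat.factorial_ne_zero m)
  rw [map_div₀, ← coeff_Sec m, factC]
  rw [mul_comm, mul_div_assoc, div_self (by rw [← factC]; exact hm), mul_one]

lemma coeff_Tc' (m : ℕ) :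
    PowerSeries.coeff (R := ℂ) m Tc = algebraMap ℚ ℂ ((P m).eval 0 / m !) := by
  have hm : ((m ! : ℕ) : ℂ) ≠ 0 := Nat.cast_ne_zero.mpr (Nat.factorial_ne_zero m)
  rw [map_div₀, ← coeff_Tc m, factC]
  rw [mul_comm, mul_div_assoc, div_self (by rw [← factC]; exact hm), mul_one]

lemma coeff_A (j : ℕ) : PowerSeries.coeff (R := ℂ) j (2*Lc - Kc) =
    if Even j then
      algebraMap ℚ ℂ ((2*(-1)^(j/2) - (-4)^(j/2)) * _root_.bernoulli j / j !) else 0 := by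
  rw [map_sub, show (2 : ℂ⟦X⟧) * Lc = PowerSeries.C (R := ℂ) 2 * Lc by rw [map_ofNat],
    PowerSeries.coeff_C_mul, Kc, Lc, coeff_mk, coeff_mk]
  split_ifs
  · rw [show ((2:ℂ)) = algebraMap ℚ ℂ 2 by norm_num, ← map_mul, ← map_sub]
    congr 1
    ring
  · simp

lemma sum_even (f : ℕ → ℂ) (h : ∀ j, ¬ Even j → f j = 0) (m : ℕ) :
    ∑ j ∈ Finset.range (2*m+1), f j = ∑ k ∈ Finset.range (m+1), f (2*k) := by
  induction m with
  | zero => simp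
  | succ m ih =>
    rw [show 2*(m+1)+1 = (2*m+1) + 1 + 1 by ring, Finset.sum_range_succ, Finset.sum_range_succ,
      ih, h (2*m+1) (by rw [Nat.even_iff]; omega), add_zero, Finset.sum_range_succ,
      Finset.sum_range_succ, show 2*(m+1) = 2*m+2 by ring]
    rw [Finset.sum_range_succ]

lemma key (n : ℕ) :
    ((2*n+2)! : ℂ) * PowerSeries.coeff (R := ℂ) (2*n+2) ((2*Lc - Kc) * Sec)
      = algebraMap ℚ ℂ (∑ k ∈ Finset.range (n+2),
          ((2*n+2).choose (2*k) : ℚ) *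
            ((2*(-1)^k - (-4)^k) * _root_.bernoulli (2*k) * (Q (2*n+2-2*k)).eval 0)) := by
  rw [PowerSeries.coeff_mul, Finset.Nat.sum_antidiagonal_eq_sum_range_succ_mk,
    show (2*n+2).succ = 2*(n+1)+1 by omega,
    sum_even _ (fun j hj => by rw [coeff_A, if_neg hj, zero_mul]) (n+1),
    Finset.mul_sum, map_sum]
  apply Finset.sum_congr rfl
  intro k hk
  rw [Finset.mem_range] at hk
  have hk2 : 2*k ≤ 2*n+2 := by omega
  have hfac : ((2*n+2)! : ℚ) = ((2*n+2).choose (2*k) : ℚ) * (2*k)! * (2*n+2-2*k)! := by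
    exact_mod_cast (Nat.choose_mul_factorial_mul_factorial hk2).symm
  rw [coeff_A, if_pos ⟨k, by ring⟩, show (2*k)/2 = k by omega, coeff_Sec',
    show ((2*n+2)! : ℂ) = algebraMap ℚ ℂ (((2*n+2)! : ℕ) : ℚ) by simp,
    ← map_mul, ← map_mul]
  congr 1
  have h1 : ((2*k)! : ℚ) ≠ 0 := Nat.cast_ne_zero.mpr (Nat.factorial_ne_zero _)
  have h2 : (((2*n+2-2*k)! : ℕ) : ℚ) ≠ 0 := Nat.cast_ne_zero.mpr (Nat.factorial_ne_zero _)
  field_simp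
  linear_combination ((2*(-1:ℚ)^k - (-4)^k) * _root_.bernoulli (2*k) * (Q (2*n+2-2*k)).eval 0) * hfac

lemma coeff_Kc (n : ℕ) : PowerSeries.coeff (R := ℂ) (2*n+2) Kc =
    algebraMap ℚ ℂ ((-4)^(n+1) * _root_.bernoulli (2*n+2) / (2*n+2)!) := by
  rw [Kc, coeff_mk, if_pos ⟨n+1, by ring⟩, show (2*n+2)/2 = n+1 by omega]

end EulerAux

theorem euler_recurrence_bernoulli (n : ℕ) :
    E (2 * n + 2) =
      (2 * n + 2 : ℚ) * E (2 * n + 1) -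
        (∑ i ∈ Finset.range (n + 1),
          ((2 * n + 2).choose (2 * i + 2) : ℚ) * (-1) ^ (i + 2) * (4 ^ (i + 1) - 2) *
            _root_.bernoulli (2 * i + 2) * E (2 * n - 2 * i)) +
        (-4) ^ (n + 1) * _root_.bernoulli (2 * n + 2) := by
  open EulerAux in
  open scoped Nat in
  have hF := congrArg (fun f => ((2*n+2)! : ℂ) * PowerSeries.coeff (R := ℂ) (2*n+2) f) EulerAux.FINAL
  rw [EulerAux.key n, map_add (PowerSeries.coeff (R := ℂ) (2*n+2)),
    show (2*n+2) = (2*n+1)+1 from rfl, PowerSeries.coeff_succ_X_mul,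
    EulerAux.coeff_Tc', show (2*n+1)+1 = 2*n+2 from rfl, EulerAux.coeff_Kc n] at hF
  rw [← map_add, show ((2*n+2)! : ℂ) = algebraMap ℚ ℂ (((2*n+2)! : ℕ) : ℚ) by simp,
    ← map_mul] at hF
  have Eq1 := (algebraMap ℚ ℂ).injective hF
  have hfac : (((2*n+2)! : ℕ) : ℚ) = (2*n+2) * ((2*n+1)! : ℕ) := by
    rw [show 2*n+2 = (2*n+1)+1 from rfl, Nat.factorial_succ]
    push_cast
    ring
  have h1 : (((2*n+1)! : ℕ) : ℚ) ≠ 0 := Nat.cast_ne_zero.mpr (Nat.factorial_ne_zero _)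
  have h2 : (((2*n+2)! : ℕ) : ℚ) ≠ 0 := Nat.cast_ne_zero.mpr (Nat.factorial_ne_zero _)
  have Eq2 : (∑ k ∈ Finset.range (n+2),
          ((2*n+2).choose (2*k) : ℚ) *
            ((2*(-1)^k - (-4)^k) * _root_.bernoulli (2*k) * (Q (2*n+2-2*k)).eval 0))
      = (2*n+2 : ℚ) * (P (2*n+1)).eval 0 + (-4)^(n+1) * _root_.bernoulli (2*n+2) := by
    rw [Eq1]
    field_simp
    linear_combination ((P (2*n+1)).eval 0 : ℚ) * hfac
  rw [Finset.sum_range_succ'] at Eq2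
  have hE2 : E (2*n+2) = (Q (2*n+2)).eval 0 := by
    simp [E, show Even (2*n+2) from ⟨n+1, by ring⟩]
  have hE1 : E (2*n+1) = (P (2*n+1)).eval 0 := by
    simp [E, show ¬ Even (2*n+1) by rw [Nat.even_iff]; omega]
  have hS : ∑ i ∈ Finset.range (n + 1),
        ((2 * n + 2).choose (2 * i + 2) : ℚ) * (-1) ^ (i + 2) * (4 ^ (i + 1) - 2) *
            _root_.bernoulli (2 * i + 2) * E (2 * n - 2 * i)
      = ∑ i ∈ Finset.range (n + 1),
        ((2*n+2).choose (2*(i+1)) : ℚ) *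
            ((2*(-1)^(i+1) - (-4)^(i+1)) * _root_.bernoulli (2*(i+1)) * (Q (2*n+2-2*(i+1))).eval 0) := by
    apply Finset.sum_congr rfl
    intro i hi
    rw [Finset.mem_range] at hi
    have hE : E (2*n-2*i) = (Q (2*n-2*i)).eval 0 := by
      simp [E, show Even (2*n-2*i) from ⟨n-i, by omega⟩]
    rw [hE, show 2*n+2-2*(i+1) = 2*n-2*i by omega, show 2*(i+1) = 2*i+2 by ring]
    have hneg : ((-4 : ℚ))^(i+1) = (-1)^(i+1) * 4^(i+1) := by
      rw [← neg_one_mul, mul_pow]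
    rw [hneg]
    ring
  rw [hE2, hE1, hS]
  have h0 : ((2*n+2).choose (2*0) : ℚ) *
      ((2*(-1)^0 - (-4)^0) * _root_.bernoulli (2*0) * (Q (2*n+2-2*0)).eval 0)
      = (Q (2*n+2)).eval 0 := by
    norm_num
  linear_combination Eq2 - h0
end

section
/- For every integer n ≥ 0, the derivative of P_n satisfies (d/dx) P_n(x) = Σ_{i=0}^{n} C(n, i) Q_i(x) Q_{n-i}(x), where C(n,i) denotes the binomial coefficient. -/
open Polynomial Finset

lemma Q_key (i j : ℕ) :
    (2 * X) * (Q i * Q j) + (1 + X ^ 2) * derivative (Q i * Q j)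
      = Q (i + 1) * Q j + Q i * Q (j + 1) := by
  show _ = ((1 + X ^ 2) * derivative (Q i) + X * Q i) * Q j
      + Q i * ((1 + X ^ 2) * derivative (Q j) + X * Q j)
  rw [derivative_mul]
  ring

lemma derivative_P_poly (n : ℕ) :
    derivative (P n) = ∑ i ∈ Finset.range (n + 1),
      (n.choose i : Polynomial ℚ) * (Q i * Q (n - i)) := by
  induction n with
  | zero => simp [P, Q]
  | succ n ih =>
    have h1 : derivative (P (n + 1))
        = (2 * X) * derivative (P n) + (1 + X ^ 2) * derivative (derivative (P n)) := by
      show derivative ((1 + X ^ 2) * derivative (P n)) = _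
      have hd : derivative (1 + X ^ 2 : Polynomial ℚ) = 2 * X := by simp [derivative_X_pow, map_ofNat]; norm_num
      rw [derivative_mul, hd]
    rw [h1, ih, derivative_sum]
    have h2 : ∀ i ∈ Finset.range (n + 1),
        derivative ((n.choose i : Polynomial ℚ) * (Q i * Q (n - i)))
          = (n.choose i : Polynomial ℚ) * derivative (Q i * Q (n - i)) := by
      intro i _
      rw [derivative_mul, derivative_natCast, zero_mul, zero_add]
    rw [Finset.sum_congr rfl h2, Finset.mul_sum, Finset.mul_sum, ← Finset.sum_add_distrib]
    have h3 : ∀ i ∈ Finset.range (n + 1),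
        2 * X * ((n.choose i : Polynomial ℚ) * (Q i * Q (n - i)))
          + (1 + X ^ 2) * ((n.choose i : Polynomial ℚ) * derivative (Q i * Q (n - i)))
        = (n.choose i : Polynomial ℚ) * (Q (i + 1) * Q (n - i))
          + (n.choose i : Polynomial ℚ) * (Q i * Q (n + 1 - i)) := by
      intro i hi
      have hin : i ≤ n := Nat.lt_succ_iff.mp (Finset.mem_range.mp hi)
      have : n + 1 - i = (n - i) + 1 := by omega
      rw [this, ← mul_add, ← Q_key i (n - i)]
      ring
    rw [Finset.sum_congr rfl h3, Finset.sum_add_distrib]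
    -- RHS
    rw [Finset.sum_range_succ' (fun i =>
      ((n + 1).choose i : Polynomial ℚ) * (Q i * Q (n + 1 - i))) (n + 1)]
    have h4 : ∀ i ∈ Finset.range (n + 1),
        (((n + 1).choose (i + 1) : Polynomial ℚ)) * (Q (i + 1) * Q (n + 1 - (i + 1)))
        = (n.choose i : Polynomial ℚ) * (Q (i + 1) * Q (n - i))
          + (n.choose (i + 1) : Polynomial ℚ) * (Q (i + 1) * Q (n - i)) := by
      intro i hi
      have : n + 1 - (i + 1) = n - i := by omega
      rw [this, Nat.choose_succ_succ, Nat.cast_add, add_mul]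
    rw [Finset.sum_congr rfl h4, Finset.sum_add_distrib]
    -- LHS second sum
    rw [Finset.sum_range_succ' (fun i =>
      (n.choose i : Polynomial ℚ) * (Q i * Q (n + 1 - i))) n]
    have h5 : ∀ i ∈ Finset.range n,
        (n.choose (i + 1) : Polynomial ℚ) * (Q (i + 1) * Q (n + 1 - (i + 1)))
        = (n.choose (i + 1) : Polynomial ℚ) * (Q (i + 1) * Q (n - i)) := by
      intro i hi
      have : n + 1 - (i + 1) = n - i := by omega
      rw [this]
    rw [Finset.sum_congr rfl h5]
    have h6 : ∑ i ∈ Finset.range (n + 1),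
        (n.choose (i + 1) : Polynomial ℚ) * (Q (i + 1) * Q (n - i))
        = ∑ i ∈ Finset.range n,
        (n.choose (i + 1) : Polynomial ℚ) * (Q (i + 1) * Q (n - i)) := by
      rw [Finset.sum_range_succ, Nat.choose_succ_self, Nat.cast_zero, zero_mul, add_zero]
    rw [h6]
    simp
    ring

theorem derivative_P_eq_sum_Q (n : ℕ) (x : ℚ) :
    (derivative (P n)).eval x =
      ∑ i ∈ Finset.range (n + 1), (n.choose i : ℚ) * (Q i).eval x * (Q (n - i)).eval x := by
  rw [derivative_P_poly, eval_finset_sum]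
  refine Finset.sum_congr rfl fun i _ => ?_
  rw [eval_mul, eval_mul, eval_natCast]
  ring
end

section
/- For every integer n ≥ 1, the derivative of Q_n satisfies (1+x^2) · (d/dx) Q_n(x) = Σ_{i=1}^{n} C(n, i) P_i(x) Q_{n-i}(x), where C(n,i) denotes the binomial coefficient. -/
open Polynomial Finset

lemma key (n : ℕ) :
    Q (n + 1) = ∑ i ∈ Finset.range (n + 1),
      (n.choose i : Polynomial ℚ) * (P i * Q (n - i)) := by
  induction n with
  | zero => simp [Q, P]
  | succ n ih =>
    have step : ∀ m, Q (m + 1) = (1 + X ^ 2) * derivative (Q m) + X * Q m := fun m => rfl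
    have hP : ∀ m, P (m + 1) = (1 + X ^ 2) * derivative (P m) := fun m => rfl
    rw [step (n+1), ih]
    rw [derivative_sum]
    rw [Finset.mul_sum, Finset.mul_sum, ← Finset.sum_add_distrib]
    have lhs_eq : ∀ i ∈ Finset.range (n + 1),
        (1 + X ^ 2) * derivative ((n.choose i : Polynomial ℚ) * (P i * Q (n - i)))
          + X * ((n.choose i : Polynomial ℚ) * (P i * Q (n - i)))
        = (n.choose i : Polynomial ℚ) * (P (i+1) * Q (n - i))
          + (n.choose i : Polynomial ℚ) * (P i * Q (n + 1 - i)) := by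
      intro i hi
      rw [Finset.mem_range] at hi
      have h1 : n + 1 - i = (n - i) + 1 := by omega
      rw [h1, step (n - i), hP i]
      rw [derivative_mul, derivative_natCast, derivative_mul]
      ring
    rw [Finset.sum_congr rfl lhs_eq, Finset.sum_add_distrib]
    rw [Finset.sum_range_succ' (fun j => ((n+1).choose j : Polynomial ℚ) * (P j * Q (n + 1 - j))) (n+1)]
    have pascal : ∀ i, ((n+1).choose (i+1) : Polynomial ℚ) = (n.choose i : Polynomial ℚ) + (n.choose (i+1) : Polynomial ℚ) := by
      intro i
      rw [Nat.choose_succ_succ]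
      push_cast
      ring
    simp only [pascal, add_mul, Finset.sum_add_distrib]
    have e1 : ∀ i ∈ Finset.range (n + 1),
        (n.choose i : Polynomial ℚ) * (P (i+1) * Q (n + 1 - (i+1)))
        = (n.choose i : Polynomial ℚ) * (P (i+1) * Q (n - i)) := by
      intro i hi
      rw [Finset.mem_range] at hi
      rw [show n + 1 - (i+1) = n - i by omega]
    rw [Finset.sum_congr rfl e1]
    have e2 : (∑ i ∈ Finset.range (n + 1), (n.choose (i+1) : Polynomial ℚ) * (P (i+1) * Q (n + 1 - (i+1))))
        + ((n+1).choose 0 : Polynomial ℚ) * (P 0 * Q (n + 1 - 0))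
        = ∑ i ∈ Finset.range (n + 1), (n.choose i : Polynomial ℚ) * (P i * Q (n + 1 - i)) := by
      rw [show ((n+1).choose 0 : Polynomial ℚ) = (n.choose 0 : Polynomial ℚ) by norm_num]
      rw [← Finset.sum_range_succ' (fun j => (n.choose j : Polynomial ℚ) * (P j * Q (n + 1 - j))) (n+1)]
      rw [Finset.sum_range_succ]
      simp [Nat.choose_succ_self]
    rw [add_assoc, e2]

theorem derivative_Q_eq_sum_PQ (n : ℕ) (hn : 1 ≤ n) (x : ℚ) :
    (1 + x ^ 2) * (derivative (Q n)).eval x =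
      ∑ i ∈ Finset.Icc 1 n, (n.choose i : ℚ) * (P i).eval x * (Q (n - i)).eval x := by
  obtain ⟨m, rfl⟩ := Nat.exists_eq_add_of_le hn
  have hpoly : (1 + X ^ 2) * derivative (Q (1 + m)) =
      ∑ i ∈ Finset.Icc 1 (1 + m), ((1+m).choose i : Polynomial ℚ) * (P i * Q (1 + m - i)) := by
    have h := key (1 + m)
    have hQ : Q (1 + m + 1) = (1 + X ^ 2) * derivative (Q (1 + m)) + X * Q (1 + m) := rfl
    rw [hQ, Finset.sum_range_succ' _ (1+m)] at h
    rw [show ((1+m).choose 0 : Polynomial ℚ) * (P 0 * Q (1 + m - 0)) = X * Q (1 + m) by simp [P]] at h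
    have h2 := add_right_cancel h
    rw [h2, ← Finset.Ico_add_one_right_eq_Icc, Finset.sum_Ico_eq_sum_range]
    refine Finset.sum_congr (by congr 1) fun i hi => ?_
    rw [add_comm 1 i]
  calc (1 + x ^ 2) * (derivative (Q (1 + m))).eval x
      = ((1 + X ^ 2) * derivative (Q (1 + m))).eval x := by simp
    _ = _ := by
        rw [hpoly, eval_finset_sum]
        refine Finset.sum_congr rfl fun i hi => ?_
        simp [mul_assoc]
end
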